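/- Let m ≥ 1, let S ⊆ ℤ be periodic with period m, p = |S ∩ [0,m−1]|, and let L' ≤ U' be integers with U' − L' ≤ m − 1 and r' = |S ∩ [L', U'−1]|. Then for all integers L ≡ L' (mod m) and U ≡ U' (mod m) with L ≤ U: m·|S ∩ [L, U−1]| = p·((U − L) − (U' − L')) + m·r'. -/

import Mathlib

private lemma fin_aux (S : Set ℤ) (a b : ℤ) : (S ∩ Set.Ico a b).Finite :=
  (Set.finite_Ico a b).subset Set.inter_subset_right

private lemma shift_aux (S : Set ℤ) (m : ℤ) (hper : ∀ n : ℤ, n ∈ S ↔ n + m ∈ S) (a b : ℤ) :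
    (S ∩ Set.Ico a b).ncard = (S ∩ Set.Ico (a + m) (b + m)).ncard := by
  have himg : (fun n => n + m) '' (S ∩ Set.Ico a b) = S ∩ Set.Ico (a + m) (b + m) := by
    ext x
    simp only [Set.mem_image, Set.mem_inter_iff, Set.mem_Ico]
    constructor
    · rintro ⟨n, ⟨hn, h1, h2⟩, rfl⟩
      exact ⟨(hper n).mp hn, by omega, by omega⟩
    · rintro ⟨hx, h1, h2⟩
      exact ⟨x - m, ⟨(hper (x - m)).mpr (by simpa using hx), by omega, by omega⟩, by omega⟩
  rw [← himg, Set.ncard_image_of_injective _ (add_left_injective m)]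

private lemma shiftZ_aux (S : Set ℤ) (m : ℤ) (hper : ∀ n : ℤ, n ∈ S ↔ n + m ∈ S)
    (a b t : ℤ) : (S ∩ Set.Ico a b).ncard = (S ∩ Set.Ico (a + t * m) (b + t * m)).ncard := by
  induction t using Int.induction_on with
  | zero => simp
  | succ k ih =>
      rw [ih, shift_aux S m hper]
      have h1 : a + (k : ℤ) * m + m = a + ((k : ℤ) + 1) * m := by ring
      have h2 : b + (k : ℤ) * m + m = b + ((k : ℤ) + 1) * m := by ring
      rw [h1, h2]
  | pred k ih =>
      rw [ih, shift_aux S m hper (a + (-(k : ℤ) - 1) * m) (b + (-(k : ℤ) - 1) * m)]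
      have h1 : a + (-(k : ℤ) - 1) * m + m = a + (-(k : ℤ)) * m := by ring
      have h2 : b + (-(k : ℤ) - 1) * m + m = b + (-(k : ℤ)) * m := by ring
      rw [h1, h2]

private lemma add_aux (S : Set ℤ) (a b c : ℤ) (hab : a ≤ b) (hbc : b ≤ c) :
    (S ∩ Set.Ico a c).ncard = (S ∩ Set.Ico a b).ncard + (S ∩ Set.Ico b c).ncard := by
  rw [← Set.Ico_union_Ico_eq_Ico hab hbc, Set.inter_union_distrib_left]
  have hd : Disjoint (Set.Ico a b) (Set.Ico b c) := by
    rw [Set.disjoint_left]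
    intro x hx hx'
    simp only [Set.mem_Ico] at hx hx'
    omega
  exact Set.ncard_union_eq
    (Set.disjoint_of_subset Set.inter_subset_right Set.inter_subset_right hd)
    (fin_aux S a b) (fin_aux S b c)

private lemma window_step (S : Set ℤ) (m : ℤ) (hm : 1 ≤ m)
    (hper : ∀ n : ℤ, n ∈ S ↔ n + m ∈ S) (a : ℤ) :
    (S ∩ Set.Ico a (a + m)).ncard = (S ∩ Set.Ico (a + 1) (a + 1 + m)).ncard := by
  have e1 := add_aux S a (a + 1) (a + m) (by omega) (by omega)
  have e2 := add_aux S (a + 1) (a + m) (a + 1 + m) (by omega) (by omega)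
  have e3 := shift_aux S m hper a (a + 1)
  omega

private lemma window_aux (S : Set ℤ) (m : ℤ) (hm : 1 ≤ m)
    (hper : ∀ n : ℤ, n ∈ S ↔ n + m ∈ S) (a : ℤ) :
    (S ∩ Set.Ico a (a + m)).ncard = (S ∩ Set.Ico 0 m).ncard := by
  induction a using Int.induction_on with
  | zero => simp
  | succ k ih => rw [← window_step S m hm hper (k : ℤ)]; exact ih
  | pred k ih =>
      have := window_step S m hm hper (-(k : ℤ) - 1)
      have h : -(k : ℤ) - 1 + 1 = -(k : ℤ) := by ring
      rw [h] at this
      rw [this]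
      convert ih using 3 <;> ring

private lemma full_aux (S : Set ℤ) (m : ℤ) (hm : 1 ≤ m)
    (hper : ∀ n : ℤ, n ∈ S ↔ n + m ∈ S) (L : ℤ) (k : ℕ) :
    (S ∩ Set.Ico L (L + (k : ℤ) * m)).ncard = k * (S ∩ Set.Ico 0 m).ncard := by
  induction k with
  | zero => simp
  | succ n ih =>
      have e := add_aux S L (L + (n : ℤ) * m) (L + ((n : ℤ) + 1) * m)
        (by nlinarith) (by nlinarith)
      have h : L + ((n : ℤ) + 1) * m = (L + (n : ℤ) * m) + m := by ring
      rw [h] at e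
      rw [show ((n + 1 : ℕ) : ℤ) = (n : ℤ) + 1 by push_cast; ring, h, e, ih,
        window_aux S m hm hper]
      ring

/-- the exact affine count formula for a periodic set over an interval
with prescribed endpoint residues. -/
theorem stmt_13 (S : Set ℤ) (m : ℤ) (hm : 1 ≤ m) (hper : ∀ n : ℤ, n ∈ S ↔ n + m ∈ S)
    (L' U' : ℤ) (hL'U' : L' ≤ U') (hlen : U' - L' ≤ m - 1)
    (L U : ℤ) (hL : L ≡ L' [ZMOD m]) (hU : U ≡ U' [ZMOD m]) (hLU : L ≤ U) :
    m * ((S ∩ Set.Ico L U).ncard : ℤ)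
      = ((S ∩ Set.Ico 0 m).ncard : ℤ) * ((U - L) - (U' - L'))
        + m * ((S ∩ Set.Ico L' U').ncard : ℤ) := by
  obtain ⟨s, hs⟩ := hL.dvd
  have hdvd : m ∣ (U - L) - (U' - L') := by
    obtain ⟨t, ht⟩ := hU.dvd
    exact ⟨s - t, by linear_combination hs - ht⟩
  obtain ⟨c, hc⟩ := hdvd
  have hc0 : 0 ≤ c := by nlinarith
  lift c to ℕ using hc0 with k
  have hsplit := add_aux S L (L + (k : ℤ) * m) U (by nlinarith) (by nlinarith)
  have hfull := full_aux S m hm hper L k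
  have htail : (S ∩ Set.Ico (L + (k : ℤ) * m) U).ncard = (S ∩ Set.Ico L' U').ncard := by
    have e := shiftZ_aux S m hper L' U' ((k : ℤ) - s)
    have h1 : L' + ((k : ℤ) - s) * m = L + (k : ℤ) * m := by linear_combination hs
    have h2 : U' + ((k : ℤ) - s) * m = U := by linear_combination hs - hc
    rw [h1, h2] at e
    exact e.symm
  rw [hsplit, htail, hfull]
  push_cast
  have hU : U - L = (U' - L') + (k : ℤ) * m := by linarith
  rw [hU]
  ring
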